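/- Let A and B be compact self-adjoint operators on Hilbert spaces H and K respectively, and let Q : K → H be a bounded operator with ‖Q‖ ≤ 1. Fix s > 0 and ε ∈ (0, min(s,1)). Suppose ‖(Q Q* − I) A‖ < s ε and ‖A − Q B Q*‖ < ε. Then the number of eigenvalues of B in ((s−ε)/(1+ε), ∞) counted with multiplicity is at least the number of eigenvalues of A in (s, ∞) counted with multiplicity. -/

import Mathlib

open ContinuousLinearMap RCLike Submodule Module.End

variable {H K : Type*} [NormedAddCommGroup H] [InnerProductSpace ℂ H] [CompleteSpace H]
  [NormedAddCommGroup K] [InnerProductSpace ℂ K] [CompleteSpace K]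

/-- The eigenvalue counting function `N_T(s, ∞)`: the number of eigenvalues of `T`
in `(s, ∞)` counted with multiplicity, i.e. the dimension of the sum of the
eigenspaces for eigenvalues `μ > s`. -/
noncomputable def eigCount {E : Type*} [NormedAddCommGroup E] [InnerProductSpace ℂ E]
    (T : E →L[ℂ] E) (s : ℝ) : ℕ :=
  Module.finrank ℂ
    ↥(⨆ μ : {μ : ℝ // s < μ}, Module.End.eigenspace (T : E →ₗ[ℂ] E) ((μ : ℝ) : ℂ))


local notation "⟪" x ", " y "⟫" => @inner ℂ _ _ x y

section Helpers

variable {E : Type*} [NormedAddCommGroup E] [InnerProductSpace ℂ E]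

theorem re_ofReal_mul'' (c : ℝ) (z : ℂ) : re (((c : ℝ) : ℂ) * z) = c * re z := by
  simp only [RCLike.mul_re, RCLike.ofReal_re, RCLike.ofReal_im, RCLike.re_to_complex,
    RCLike.im_to_complex, Complex.ofReal_re, Complex.ofReal_im, zero_mul, sub_zero]

theorem orth_sum_inner (T : E →ₗ[ℂ] E) (hT : T.IsSymmetric) {s : ℝ}
    (d : {μ : ℝ // s < μ} →₀ E)
    (hd : ∀ i : {μ : ℝ // s < μ}, d i ∈ Module.End.eigenspace T ((i : ℝ) : ℂ))
    (c c' : {μ : ℝ // s < μ} → ℝ) :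
    re ⟪∑ i ∈ d.support, (c i : ℂ) • d i, ∑ i ∈ d.support, (c' i : ℂ) • d i⟫
      = ∑ i ∈ d.support, c i * c' i * ‖d i‖ ^ 2 := by
  rw [sum_inner, map_sum]
  refine Finset.sum_congr rfl fun i hi => ?_
  rw [inner_sum, map_sum, Finset.sum_eq_single i]
  · rw [inner_smul_left, inner_smul_right]
    simp [← Complex.ofReal_mul, mul_assoc, ← inner_self_eq_norm_sq (𝕜 := ℂ)]
  · intro j hj hji
    have := hT.orthogonalFamily_eigenspaces (show ((i:ℝ):ℂ) ≠ ((j:ℝ):ℂ) by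
      simp only [ne_eq, Complex.ofReal_inj]
      exact_mod_cast fun h => hji (Subtype.ext h).symm) ⟨d i, hd i⟩ ⟨d j, hd j⟩
    have h0 : ⟪d i, d j⟫ = 0 := this
    rw [inner_smul_left, inner_smul_right, h0]
    simp
  · intro h; exact absurd hi h

theorem spect [CompleteSpace E] (T : E →L[ℂ] E) (hT : IsSelfAdjoint T) {s : ℝ} (hs : 0 < s) {x : E}
    (hx : x ∈ ⨆ μ : {μ : ℝ // s < μ}, Module.End.eigenspace (T : E →ₗ[ℂ] E) ((μ : ℝ) : ℂ)) :
    s * ‖x‖ ^ 2 ≤ re ⟪T x, x⟫ ∧ s * ‖x‖ ≤ ‖T x‖ ∧ ∃ w, T w = x ∧ s * ‖w‖ ≤ ‖x‖ := by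
  rw [Submodule.mem_iSup_iff_exists_finsupp] at hx
  obtain ⟨d, hd, hsum⟩ := hx
  rw [Finsupp.sum] at hsum
  have hsym := hT.isSymmetric
  have hTd : ∀ i : {μ : ℝ // s < μ}, T (d i) = ((i : ℝ) : ℂ) • d i := fun i =>
    Module.End.mem_eigenspace_iff.mp (hd i)
  have key := fun c c' => orth_sum_inner (T : E →ₗ[ℂ] E) hsym d hd c c'
  have hx1 : x = ∑ i ∈ d.support, ((1 : ℝ) : ℂ) • d i := by
    rw [← hsum]; simp
  have hTx : T x = ∑ i ∈ d.support, ((i : ℝ) : ℂ) • d i := by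
    rw [hx1, map_sum]
    refine Finset.sum_congr rfl fun i _ => ?_
    simp [hTd i]
  have hnx : ‖x‖ ^ 2 = ∑ i ∈ d.support, ‖d i‖ ^ 2 := by
    have := key (fun _ => 1) (fun _ => 1)
    rw [← hx1] at this
    rw [← inner_self_eq_norm_sq (𝕜 := ℂ), this]
    exact Finset.sum_congr rfl fun i _ => by ring
  have hre : re ⟪T x, x⟫ = ∑ i ∈ d.support, (i : ℝ) * ‖d i‖ ^ 2 := by
    have := key (fun i => (i : ℝ)) (fun _ => 1)
    rw [← hx1, ← hTx] at this
    rw [this]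
    exact Finset.sum_congr rfl fun i _ => by ring
  have hnTx : ‖T x‖ ^ 2 = ∑ i ∈ d.support, (i : ℝ) * (i : ℝ) * ‖d i‖ ^ 2 := by
    have := key (fun i => (i : ℝ)) (fun i => (i : ℝ))
    rw [← hTx] at this
    rw [← inner_self_eq_norm_sq (𝕜 := ℂ), this]
  refine ⟨?_, ?_, ?_⟩
  · rw [hre, hnx, Finset.mul_sum]
    refine Finset.sum_le_sum fun i _ => ?_
    have : s ≤ (i : ℝ) := le_of_lt i.2
    nlinarith [sq_nonneg ‖d i‖]
  · have h2 : (s * ‖x‖) ^ 2 ≤ ‖T x‖ ^ 2 := by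
      rw [hnTx, mul_pow, hnx, Finset.mul_sum]
      refine Finset.sum_le_sum fun i _ => ?_
      have h : s ≤ (i : ℝ) := le_of_lt i.2
      have hss : s * s ≤ (i:ℝ) * (i:ℝ) := mul_le_mul h h hs.le (hs.trans i.2).le
      nlinarith [mul_le_mul_of_nonneg_right hss (sq_nonneg ‖d i‖)]
    have h3 : 0 ≤ s * ‖x‖ := by positivity
    nlinarith [norm_nonneg (T x)]
  · refine ⟨∑ i ∈ d.support, ((1 / (i : ℝ) : ℝ) : ℂ) • d i, ?_, ?_⟩
    · rw [map_sum, ← hsum]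
      refine Finset.sum_congr rfl fun i _ => ?_
      rw [map_smul, hTd i, smul_smul]
      have hi0 : ((i : ℝ) : ℂ) ≠ 0 := by
        exact_mod_cast ne_of_gt (hs.trans i.2)
      have hr0 : ((i : ℝ))⁻¹ * (i : ℝ) = 1 := inv_mul_cancel₀ (ne_of_gt (hs.trans i.2))
      rw [one_div, ← Complex.ofReal_mul, hr0, Complex.ofReal_one, one_smul]
    · have hw : ‖∑ i ∈ d.support, ((1 / (i : ℝ) : ℝ) : ℂ) • d i‖ ^ 2
          = ∑ i ∈ d.support, (1 / (i : ℝ)) * (1 / (i : ℝ)) * ‖d i‖ ^ 2 := by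
        rw [← inner_self_eq_norm_sq (𝕜 := ℂ)]
        exact key (fun i => 1 / (i : ℝ)) (fun i => 1 / (i : ℝ))
      have h2 : (s * ‖∑ i ∈ d.support, ((1 / (i : ℝ) : ℝ) : ℂ) • d i‖) ^ 2 ≤ ‖x‖ ^ 2 := by
        rw [mul_pow, hw, hnx, Finset.mul_sum]
        refine Finset.sum_le_sum fun i _ => ?_
        have his : s ≤ (i : ℝ) := le_of_lt i.2
        have hi0 : (0 : ℝ) < (i : ℝ) := hs.trans i.2
        have : s * (1 / (i : ℝ)) ≤ 1 := by
          rw [mul_one_div, div_le_one hi0]; exact his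
        have h0 : 0 ≤ s * (1 / (i : ℝ)) := by positivity
        nlinarith [sq_nonneg ‖d i‖, mul_le_mul this this h0 zero_le_one]
      have h3 : 0 ≤ s * ‖∑ i ∈ d.support, ((1 / (i : ℝ) : ℝ) : ℂ) • d i‖ := by positivity
      nlinarith [norm_nonneg x]

theorem esp_invariant [CompleteSpace E] (B : E →L[ℂ] E) {t : ℝ} {x : E}
    (hx : x ∈ ⨆ μ : {μ : ℝ // t < μ}, Module.End.eigenspace (B : E →ₗ[ℂ] E) ((μ : ℝ) : ℂ)) :
    B x ∈ ⨆ μ : {μ : ℝ // t < μ}, Module.End.eigenspace (B : E →ₗ[ℂ] E) ((μ : ℝ) : ℂ) := by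
  set Esp := ⨆ μ : {μ : ℝ // t < μ}, Module.End.eigenspace (B : E →ₗ[ℂ] E) ((μ : ℝ) : ℂ)
  have : Esp ≤ Esp.comap (B : E →ₗ[ℂ] E) := by
    refine iSup_le fun i => ?_
    intro v hv
    have : B v = ((i : ℝ) : ℂ) • v := Module.End.mem_eigenspace_iff.mp hv
    simp only [Submodule.mem_comap]
    show B v ∈ Esp
    rw [this]
    exact Submodule.smul_mem _ _ (Submodule.mem_iSup_of_mem i hv)
  exact this hx

theorem esp_finiteDimensional [CompleteSpace E] (B : E →L[ℂ] E)
    (hBc : IsCompactOperator (B : E → E)) (hBsa : IsSelfAdjoint B) {t : ℝ} (ht : 0 < t) :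
    FiniteDimensional ℂ
      ↥(⨆ μ : {μ : ℝ // t < μ}, Module.End.eigenspace (B : E →ₗ[ℂ] E) ((μ : ℝ) : ℂ)) := by
  set Esp := ⨆ μ : {μ : ℝ // t < μ}, Module.End.eigenspace (B : E →ₗ[ℂ] E) ((μ : ℝ) : ℂ) with hEsp
  by_contra hfin
  obtain ⟨R, f, hR1, hfR, hsep⟩ := exists_seq_norm_le_one_le_norm_sub (𝕜 := ℂ) hfin
  have hCc : IsCompact (closure ((B : E → E) '' Metric.closedBall 0 R)) :=
    hBc.isCompact_closure_image_of_bounded (Metric.isBounded_closedBall)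
  have htb : TotallyBounded ((B : E → E) '' Metric.closedBall 0 R) :=
    (hCc.totallyBounded).subset subset_closure
  rw [Metric.totallyBounded_iff] at htb
  obtain ⟨F, hFfin, hFsub⟩ := htb (t / 3) (by linarith)
  have hmem : ∀ n, B ((f n : E)) ∈ (B : E → E) '' Metric.closedBall 0 R := fun n =>
    ⟨(f n : E), by simpa [Metric.mem_closedBall, dist_zero_right] using hfR n, rfl⟩
  have hchoice : ∀ n, ∃ y ∈ F, B ((f n : E)) ∈ Metric.ball y (t / 3) := fun n => by
    have := hFsub (hmem n)
    simpa using this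
  choose y hyF hby using hchoice
  haveI : Finite ↥F := hFfin.to_subtype
  obtain ⟨m, n, hmn, heq⟩ := Finite.exists_ne_map_eq_of_infinite (fun n => (⟨y n, hyF n⟩ : F))
  have h1 : dist (B ((f m : E))) (B ((f n : E))) < 2 * (t / 3) := by
    have hm := hby m
    have hn := hby n
    rw [Subtype.ext_iff] at heq
    simp only at heq
    rw [Metric.mem_ball] at hm hn
    calc dist (B ((f m : E))) (B ((f n : E))) ≤ dist (B ((f m : E))) (y m) + dist (y m) (B ((f n : E))) :=
          dist_triangle _ _ _
      _ < t / 3 + t / 3 := by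
          rw [heq] at hm ⊢
          exact add_lt_add hm (by rw [dist_comm]; exact hn)
      _ = 2 * (t / 3) := by ring
  have h2 : t ≤ dist (B ((f m : E))) (B ((f n : E))) := by
    have hmem2 : ((f m - f n : ↥Esp) : E) ∈ Esp := (f m - f n).2
    have key := (spect B hBsa ht hmem2).2.1
    have hb : B ((f m - f n : ↥Esp) : E) = B (f m : E) - B (f n : E) := by
      push_cast
      simp [map_sub]
    rw [hb] at key
    have hsep' : (1 : ℝ) ≤ ‖((f m - f n : ↥Esp) : E)‖ := hsep hmn
    rw [dist_eq_norm]
    nlinarith [norm_nonneg (B ((f m : E)) - B ((f n : E)))]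
  linarith


theorem polar_bound [CompleteSpace E] (C : E →L[ℂ] E) (hCsym : (C : E →ₗ[ℂ] E).IsSymmetric)
    (F : Submodule ℂ E) (hCF : ∀ v ∈ F, C v ∈ F) {M : ℝ} (hM : 0 ≤ M)
    (hup : ∀ v ∈ F, re ⟪C v, v⟫ ≤ M * ‖v‖ ^ 2)
    (hpos : ∀ v ∈ F, 0 ≤ re ⟪C v, v⟫) :
    ∀ u ∈ F, ‖C u‖ ≤ M * ‖u‖ := by
  intro u huF
  by_cases hCu : C u = 0
  · rw [hCu, norm_zero]; positivity
  have hu0 : u ≠ 0 := fun h => hCu (by rw [h, map_zero])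
  have hnu : (0:ℝ) < ‖u‖ := norm_pos_iff.mpr hu0
  have hnCu : (0:ℝ) < ‖C u‖ := norm_pos_iff.mpr hCu
  set v : E := ((‖u‖ / ‖C u‖ : ℝ) : ℂ) • C u with hv
  have hvF : v ∈ F := Submodule.smul_mem _ _ (hCF u huF)
  have hnv : ‖v‖ = ‖u‖ := by
    rw [hv, norm_smul]
    simp [abs_of_pos (div_pos hnu hnCu), div_mul_cancel₀, hnCu.ne']
  have hpol : re ⟪C (u + v), u + v⟫ - re ⟪C (u - v), u - v⟫ = 4 * re ⟪C u, v⟫ := by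
    have h : ⟪C v, u⟫ = ⟪v, C u⟫ := hCsym v u
    have hre : re ⟪C v, u⟫ = re ⟪C u, v⟫ := by
      rw [h]
      exact inner_re_symm _ _
    simp only [map_add, map_sub, inner_add_left, inner_add_right, inner_sub_left,
      inner_sub_right]
    linarith [hre]
  have h1 : re ⟪C (u + v), u + v⟫ ≤ M * (2 * ‖u‖) ^ 2 := by
    refine (hup _ (Submodule.add_mem _ huF hvF)).trans ?_
    have h4 : ‖u + v‖ ≤ 2 * ‖u‖ := by
      refine (norm_add_le _ _).trans ?_
      rw [hnv]; linarith
    exact mul_le_mul_of_nonneg_left (by nlinarith [norm_nonneg (u+v)]) hM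
  have h2 : 0 ≤ re ⟪C (u - v), u - v⟫ := hpos _ (Submodule.sub_mem _ huF hvF)
  have h3 : re ⟪C u, v⟫ = ‖u‖ * ‖C u‖ := by
    rw [hv, inner_smul_right, inner_self_eq_norm_sq_to_K]
    have hr : (‖u‖ / ‖C u‖) * ‖C u‖ ^ 2 = ‖u‖ * ‖C u‖ := by
      field_simp
    norm_cast
    simp only [RCLike.mul_re, RCLike.ofReal_re, RCLike.ofReal_im, RCLike.re_to_complex, RCLike.im_to_complex, Complex.ofReal_re, Complex.ofReal_im, mul_zero, zero_mul, sub_zero]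
    linarith [hr]
  nlinarith [h1, h2, hpol, h3, mul_pos hnu hnCu]

theorem ray [CompleteSpace E] (B : E →L[ℂ] E) (hBc : IsCompactOperator (B : E → E))
    (hBsa : IsSelfAdjoint B) {t : ℝ} (ht : 0 < t) :
    ∀ w ∈ (⨆ μ : {μ : ℝ // t < μ}, Module.End.eigenspace (B : E →ₗ[ℂ] E) ((μ : ℝ) : ℂ))ᗮ,
      re ⟪B w, w⟫ ≤ t * ‖w‖ ^ 2 := by
  set Esp := ⨆ μ : {μ : ℝ // t < μ}, Module.End.eigenspace (B : E →ₗ[ℂ] E) ((μ : ℝ) : ℂ) with hEsp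
  by_contra hcon
  push_neg at hcon
  obtain ⟨w, hwF, hwlt⟩ := hcon
  have hsym := hBsa.isSymmetric
  -- invariance of F := Espᗮ
  have hEspInv : ∀ x ∈ Esp, B x ∈ Esp := fun x hx => esp_invariant B hx
  have hBF : ∀ v ∈ Espᗮ, B v ∈ Espᗮ := by
    intro v hvF
    rw [Submodule.mem_orthogonal]
    intro u huE
    have h1 : ⟪B u, v⟫ = ⟪u, B v⟫ := hsym u v
    rw [← h1]
    exact hvF (B u) (hEspInv u huE)
  have hw0 : w ≠ 0 := by
    rintro rfl
    simp at hwlt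
  have hnw : (0:ℝ) < ‖w‖ := norm_pos_iff.mpr hw0
  set ρ : E → ℝ := fun y => re ⟪B y, y⟫ with hρ
  set S : Set ℝ := ρ '' {y : E | y ∈ Espᗮ ∧ ‖y‖ = 1} with hS
  have hscale : ∀ (y : E) (c : ℝ), ρ (((c : ℝ) : ℂ) • y) = c ^ 2 * ρ y := by
    intro y c
    simp only [hρ, map_smul, inner_smul_left, inner_smul_right, Complex.conj_ofReal]
    rw [← mul_assoc, ← Complex.ofReal_mul]
    simp only [RCLike.mul_re, RCLike.ofReal_re, RCLike.ofReal_im, RCLike.re_to_complex,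
      RCLike.im_to_complex, Complex.ofReal_re, Complex.ofReal_im, zero_mul, sub_zero]
    ring
  set y₀ : E := ((‖w‖⁻¹ : ℝ) : ℂ) • w with hy₀
  have hy₀F : y₀ ∈ Espᗮ := Submodule.smul_mem _ _ hwF
  have hy₀n : ‖y₀‖ = 1 := by
    rw [hy₀, norm_smul]
    simp [abs_of_pos (inv_pos.mpr hnw), inv_mul_cancel₀ hnw.ne']
  have hy₀ρ : t < ρ y₀ := by
    rw [hy₀, hscale w ‖w‖⁻¹]
    have h2 : (‖w‖⁻¹) ^ 2 * (t * ‖w‖ ^ 2) < (‖w‖⁻¹) ^ 2 * ρ w :=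
      mul_lt_mul_of_pos_left hwlt (by positivity)
    calc t = (‖w‖⁻¹) ^ 2 * (t * ‖w‖ ^ 2) := by field_simp
      _ < (‖w‖⁻¹) ^ 2 * ρ w := h2
  have hbddS : BddAbove S := by
    refine ⟨‖B‖, ?_⟩
    rintro a ⟨y, ⟨hyF, hyn⟩, rfl⟩
    calc ρ y ≤ ‖⟪B y, y⟫‖ := RCLike.re_le_norm _
      _ ≤ ‖B y‖ * ‖y‖ := norm_inner_le_norm _ _
      _ ≤ (‖B‖ * ‖y‖) * ‖y‖ := by
          exact mul_le_mul_of_nonneg_right (B.le_opNorm y) (norm_nonneg _)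
      _ = ‖B‖ := by rw [hyn]; ring
  have hSne : S.Nonempty := ⟨ρ y₀, ⟨y₀, ⟨hy₀F, hy₀n⟩, rfl⟩⟩
  set r := sSup S with hr
  have hrt : t < r := lt_of_lt_of_le hy₀ρ (le_csSup hbddS ⟨y₀, ⟨hy₀F, hy₀n⟩, rfl⟩)
  have hr0 : (0:ℝ) < r := ht.trans hrt
  have hrle : ∀ v ∈ Espᗮ, ρ v ≤ r * ‖v‖ ^ 2 := by
    intro v hvF
    by_cases hv0 : v = 0
    · simp [hv0, hρ]
    have hnv : (0:ℝ) < ‖v‖ := norm_pos_iff.mpr hv0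
    have h1 : ρ (((‖v‖⁻¹ : ℝ) : ℂ) • v) ≤ r := le_csSup hbddS
      ⟨_, ⟨Submodule.smul_mem _ _ hvF, by
        rw [norm_smul]; simp [abs_of_pos (inv_pos.mpr hnv), inv_mul_cancel₀ hnv.ne']⟩, rfl⟩
    rw [hscale v ‖v‖⁻¹] at h1
    have h2 : ρ v = ‖v‖ ^ 2 * ((‖v‖⁻¹) ^ 2 * ρ v) := by field_simp
    rw [h2]
    calc ‖v‖ ^ 2 * ((‖v‖⁻¹) ^ 2 * ρ v) ≤ ‖v‖ ^ 2 * r :=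
        mul_le_mul_of_nonneg_left h1 (by positivity)
      _ = r * ‖v‖ ^ 2 := by ring
  set c : ℝ := ‖B‖ with hc
  have hc0 : 0 ≤ c := norm_nonneg _
  set C : E →L[ℂ] E := B + ((c : ℝ) : ℂ) • 1 with hC
  have hCapp : ∀ v, C v = B v + ((c : ℝ) : ℂ) • v := by
    intro v; simp [hC]
  have hCsym : (C : E →ₗ[ℂ] E).IsSymmetric := by
    intro a b
    show ⟪C a, b⟫ = ⟪a, C b⟫
    rw [hCapp, hCapp, inner_add_left, inner_add_right, inner_smul_left, inner_smul_right,
      Complex.conj_ofReal]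
    rw [show ⟪B a, b⟫ = ⟪a, B b⟫ from hsym a b]
  have hCF : ∀ v ∈ Espᗮ, C v ∈ Espᗮ := by
    intro v hv
    rw [hCapp]
    exact Submodule.add_mem _ (hBF v hv) (Submodule.smul_mem _ _ hv)
  set M : ℝ := c + r with hM
  have hM0 : 0 ≤ M := by positivity
  have hQrw : ∀ v, re ⟪C v, v⟫ = ρ v + c * ‖v‖ ^ 2 := by
    intro v
    rw [hCapp, inner_add_left, map_add, inner_smul_left, Complex.conj_ofReal]
    rw [← inner_self_eq_norm_sq (𝕜 := ℂ) v]
    congr 1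
    simp only [RCLike.mul_re, RCLike.ofReal_re, RCLike.ofReal_im, RCLike.re_to_complex,
      RCLike.im_to_complex, Complex.ofReal_re, Complex.ofReal_im, zero_mul, sub_zero]
  have hup : ∀ v ∈ Espᗮ, re ⟪C v, v⟫ ≤ M * ‖v‖ ^ 2 := by
    intro v hv
    rw [hQrw]
    have := hrle v hv
    rw [hM]
    nlinarith [this]
  have hpos : ∀ v ∈ Espᗮ, 0 ≤ re ⟪C v, v⟫ := by
    intro v hv
    rw [hQrw]
    have h1 : |ρ v| ≤ ‖B‖ * ‖v‖ ^ 2 := by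
      calc |ρ v| ≤ ‖⟪B v, v⟫‖ := RCLike.abs_re_le_norm _
        _ ≤ ‖B v‖ * ‖v‖ := norm_inner_le_norm _ _
        _ ≤ ‖B‖ * ‖v‖ ^ 2 := by nlinarith [B.le_opNorm v, norm_nonneg v, norm_nonneg (B v), opNorm_nonneg B]
    have := abs_le.mp h1
    nlinarith [this.1]
  have hCnorm := polar_bound C hCsym Espᗮ hCF hM0 hup hpos
  obtain ⟨u, humono, hutend, humem⟩ := exists_seq_tendsto_sSup hSne hbddS
  have hchoose : ∀ n, ∃ y : E, (y ∈ Espᗮ ∧ ‖y‖ = 1) ∧ ρ y = u n := fun n => humem n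
  choose y hy hyρ using hchoose
  have hukey : ∀ n, ‖B (y n) - ((r : ℝ) : ℂ) • y n‖ ^ 2 ≤ 2 * M * (r - u n) := by
    intro n
    have hyF := (hy n).1
    have hyn := (hy n).2
    have heq : B (y n) - ((r : ℝ) : ℂ) • y n = C (y n) - ((M : ℝ) : ℂ) • y n := by
      rw [hCapp, hM]
      push_cast
      rw [add_smul]
      abel
    rw [heq, norm_sub_sq (𝕜 := ℂ)]
    have e1 : re ⟪C (y n), ((M : ℝ) : ℂ) • y n⟫ = M * (u n + c) := by
      have h5 : re ⟪C (y n), y n⟫ = u n + c := by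
        rw [hQrw, hyρ, hyn]; ring
      rw [inner_smul_right, re_ofReal_mul'', h5]
    have e2 : ‖((M : ℝ) : ℂ) • y n‖ = M := by
      rw [norm_smul, hyn]
      simp [abs_of_nonneg hM0]
    have e3 : ‖C (y n)‖ ≤ M := by
      have := hCnorm (y n) hyF
      rwa [hyn, mul_one] at this
    have hun : u n ≤ r := le_csSup hbddS (humem n)
    rw [e1, e2]
    nlinarith [norm_nonneg (C (y n)), e3]
  -- compactness and convergence
  have hK := hBc.isCompact_closure_image_of_bounded (Metric.isBounded_closedBall (x := (0:E)) (r := 1))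
  have hmem : ∀ n, B (y n) ∈ closure ((B : E → E) '' Metric.closedBall 0 1) := fun n =>
    subset_closure ⟨y n, by simp [Metric.mem_closedBall, dist_zero_right, (hy n).2], rfl⟩
  obtain ⟨z, hzmem, φ, hφmono, hφtend⟩ := hK.isSeqCompact hmem
  have hdiff : Filter.Tendsto (fun n => B (y n) - ((r : ℝ) : ℂ) • y n) Filter.atTop (nhds 0) := by
    rw [tendsto_zero_iff_norm_tendsto_zero]
    have h0 : Filter.Tendsto (fun n => 2 * M * (r - u n)) Filter.atTop (nhds 0) := by
      have := (Filter.Tendsto.const_sub r hutend).const_mul (2 * M)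
      simpa [← hr] using this
    have hsq : Filter.Tendsto (fun n => Real.sqrt (2 * M * (r - u n))) Filter.atTop (nhds 0) := by
      have := (Real.continuous_sqrt.tendsto 0).comp h0
      simpa [Function.comp_def] using this
    refine squeeze_zero (fun n => norm_nonneg _) (fun n => ?_) hsq
    exact Real.le_sqrt_of_sq_le (hukey n)
  have hry : Filter.Tendsto (fun n => ((r : ℝ) : ℂ) • y (φ n)) Filter.atTop (nhds z) := by
    have := hφtend.sub (hdiff.comp (hφmono.tendsto_atTop))
    simp only [Function.comp] at this ⊢
    convert this using 2 with n
    · abel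
    · simp
  have hrne : ((r : ℝ) : ℂ) ≠ 0 := by exact_mod_cast hr0.ne'
  have hytend : Filter.Tendsto (fun n => y (φ n)) Filter.atTop (nhds ((((r : ℝ) : ℂ))⁻¹ • z)) := by
    have hcont := hry.const_smul ((((r : ℝ) : ℂ))⁻¹)
    have heqf : (fun n => (((r : ℝ) : ℂ))⁻¹ • (((r : ℝ) : ℂ) • y (φ n))) = fun n => y (φ n) := by
      funext n
      rw [smul_smul, inv_mul_cancel₀ hrne, one_smul]
    rwa [heqf] at hcont
  set x : E := (((r : ℝ) : ℂ))⁻¹ • z with hx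
  have hxF : x ∈ Espᗮ := by
    have hclosed : IsClosed (Espᗮ : Set E) := Submodule.isClosed_orthogonal _
    exact hclosed.mem_of_tendsto hytend (Filter.Eventually.of_forall fun n => (hy (φ n)).1)
  have hxn : ‖x‖ = 1 := by
    have h1 : Filter.Tendsto (fun n => ‖y (φ n)‖) Filter.atTop (nhds ‖x‖) :=
      (continuous_norm.tendsto x).comp hytend
    have h2 : Filter.Tendsto (fun n => ‖y (φ n)‖) Filter.atTop (nhds 1) := by
      simp only [fun n => (hy (φ n)).2]
      exact tendsto_const_nhds
    exact tendsto_nhds_unique h1 h2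
  have hBx : B x = ((r : ℝ) : ℂ) • x := by
    have h1 : Filter.Tendsto (fun n => B (y (φ n))) Filter.atTop (nhds (B x)) :=
      (B.continuous.tendsto x).comp hytend
    have h2 : B x = z := tendsto_nhds_unique h1 hφtend
    rw [h2, hx, smul_smul, mul_inv_cancel₀ hrne, one_smul]
  have hxEsp : x ∈ Esp := by
    apply Submodule.mem_iSup_of_mem (⟨r, hrt⟩ : {μ : ℝ // t < μ})
    exact Module.End.mem_eigenspace_iff.mpr hBx
  have : ⟪x, x⟫ = 0 := hxF x hxEsp
  have hx0 : x = 0 := inner_self_eq_zero.mp this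
  rw [hx0, norm_zero] at hxn
  exact zero_ne_one hxn


end Helpers

set_option maxHeartbeats 1000000 in
/-- Let `A`, `B` be compact self-adjoint operators on Hilbert spaces `H`, `K`,
`Q : K → H` bounded with `‖Q‖ ≤ 1`, `s > 0`, `ε ∈ (0, min s 1)`. If
`‖(QQ* − I)A‖ < sε` and `‖A − QBQ*‖ < ε`, then the number of eigenvalues of `B` in
`((s−ε)/(1+ε), ∞)` is at least the number of eigenvalues of `A` in `(s, ∞)`. -/
theorem eigCount_le_of_norm_perturbation
    (A : H →L[ℂ] H) (B : K →L[ℂ] K) (Q : K →L[ℂ] H)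
    (hAc : IsCompactOperator (A : H → H)) (hAsa : IsSelfAdjoint A)
    (hBc : IsCompactOperator (B : K → K)) (hBsa : IsSelfAdjoint B)
    (hQ : ‖Q‖ ≤ 1) (s ε : ℝ) (hs : 0 < s) (hε : ε ∈ Set.Ioo 0 (min s 1))
    (h1 : ‖(Q ∘L adjoint Q - 1) ∘L A‖ < s * ε)
    (h2 : ‖A - Q ∘L B ∘L adjoint Q‖ < ε) :
    eigCount A s ≤ eigCount B ((s - ε) / (1 + ε)) := by
  obtain ⟨hε0, hεlt⟩ := hε
  have hεs : ε < s := lt_of_lt_of_le hεlt (min_le_left _ _)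
  have hε1 : ε < 1 := lt_of_lt_of_le hεlt (min_le_right _ _)
  set t : ℝ := (s - ε) / (1 + ε) with htdef
  have ht : 0 < t := div_pos (by linarith) (by linarith)
  rw [eigCount, eigCount]
  set V := ⨆ μ : {μ : ℝ // s < μ}, Module.End.eigenspace (A : H →ₗ[ℂ] H) ((μ : ℝ) : ℂ) with hV
  set Esp := ⨆ μ : {μ : ℝ // t < μ}, Module.End.eigenspace (B : K →ₗ[ℂ] K) ((μ : ℝ) : ℂ) with hEsp
  haveI hEfin : FiniteDimensional ℂ ↥Esp := esp_finiteDimensional B hBc hBsa ht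
  haveI : CompleteSpace ↥Esp := FiniteDimensional.complete ℂ _
  by_cases hVfin : FiniteDimensional ℂ ↥V
  swap
  · rw [Module.finrank_of_infinite_dimensional hVfin]
    exact Nat.zero_le _
  -- key estimates
  have key : ∀ v, v ∈ V → v ≠ 0 →
      adjoint Q v ≠ 0 ∧ t * ‖adjoint Q v‖ ^ 2 < re ⟪B (adjoint Q v), adjoint Q v⟫ := by
    intro v hvV hv0
    have hnv : (0:ℝ) < ‖v‖ := norm_pos_iff.mpr hv0
    obtain ⟨hAv, -, w, hw1, hw2⟩ := spect A hAsa hs hvV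
    -- bound on (QQ* - 1) v
    have hQQ : ‖(Q ∘L adjoint Q - 1) v‖ ≤ ε * ‖v‖ := by
      have e0 : (Q ∘L adjoint Q - 1) v = ((Q ∘L adjoint Q - 1) ∘L A) w := by
        rw [ContinuousLinearMap.comp_apply, hw1]
      rw [e0]
      calc ‖((Q ∘L adjoint Q - 1) ∘L A) w‖ ≤ ‖(Q ∘L adjoint Q - 1) ∘L A‖ * ‖w‖ :=
            ContinuousLinearMap.le_opNorm _ _
        _ ≤ (s * ε) * ‖w‖ := mul_le_mul_of_nonneg_right h1.le (norm_nonneg _)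
        _ ≤ ε * ‖v‖ := by nlinarith [hw2, norm_nonneg w]
    -- norm of w' := adjoint Q v
    have hnorm_eq : ‖adjoint Q v‖ ^ 2 = re ⟪v, v⟫ + re ⟪v, (Q ∘L adjoint Q - 1) v⟫ := by
      rw [← inner_self_eq_norm_sq (𝕜 := ℂ)]
      have e1 : ⟪adjoint Q v, adjoint Q v⟫ = ⟪v, Q (adjoint Q v)⟫ :=
        ContinuousLinearMap.adjoint_inner_left Q (adjoint Q v) v
      rw [e1]
      have e2 : Q (adjoint Q v) = v + (Q ∘L adjoint Q - 1) v := by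
        simp [ContinuousLinearMap.sub_apply, ContinuousLinearMap.comp_apply]
      rw [e2, inner_add_right, map_add]
    have habs : |re ⟪v, (Q ∘L adjoint Q - 1) v⟫| ≤ ε * ‖v‖ ^ 2 := by
      calc |re ⟪v, (Q ∘L adjoint Q - 1) v⟫| ≤ ‖⟪v, (Q ∘L adjoint Q - 1) v⟫‖ :=
            RCLike.abs_re_le_norm _
        _ ≤ ‖v‖ * ‖(Q ∘L adjoint Q - 1) v‖ := norm_inner_le_norm _ _
        _ ≤ ‖v‖ * (ε * ‖v‖) := mul_le_mul_of_nonneg_left hQQ (norm_nonneg _)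
        _ = ε * ‖v‖ ^ 2 := by ring
    have hself : re ⟪v, v⟫ = ‖v‖ ^ 2 := inner_self_eq_norm_sq (𝕜 := ℂ) v
    have hub : ‖adjoint Q v‖ ^ 2 ≤ (1 + ε) * ‖v‖ ^ 2 := by
      rw [hnorm_eq, hself]
      have := (abs_le.mp habs).2
      linarith
    have hlb : (1 - ε) * ‖v‖ ^ 2 ≤ ‖adjoint Q v‖ ^ 2 := by
      rw [hnorm_eq, hself]
      have := (abs_le.mp habs).1
      linarith
    have hw'0 : adjoint Q v ≠ 0 := by
      intro h0
      rw [h0, norm_zero] at hlb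
      norm_num at hlb
      nlinarith [pow_pos hnv 2]
    refine ⟨hw'0, ?_⟩
    -- Rayleigh quotient estimate
    have hBe : re ⟪B (adjoint Q v), adjoint Q v⟫ = re ⟪(Q ∘L B ∘L adjoint Q) v, v⟫ := by
      have e3 : ⟪B (adjoint Q v), adjoint Q v⟫ = ⟪Q (B (adjoint Q v)), v⟫ :=
        ContinuousLinearMap.adjoint_inner_right Q (B (adjoint Q v)) v
      have e4 : (Q ∘L B ∘L adjoint Q) v = Q (B (adjoint Q v)) := by
        rw [ContinuousLinearMap.comp_apply, ContinuousLinearMap.comp_apply]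
      rw [e3, e4]
    have hpert : |re ⟪(A - Q ∘L B ∘L adjoint Q) v, v⟫| ≤ ‖A - Q ∘L B ∘L adjoint Q‖ * ‖v‖ ^ 2 := by
      calc |re ⟪(A - Q ∘L B ∘L adjoint Q) v, v⟫| ≤ ‖⟪(A - Q ∘L B ∘L adjoint Q) v, v⟫‖ :=
            RCLike.abs_re_le_norm _
        _ ≤ ‖(A - Q ∘L B ∘L adjoint Q) v‖ * ‖v‖ := norm_inner_le_norm _ _
        _ ≤ (‖A - Q ∘L B ∘L adjoint Q‖ * ‖v‖) * ‖v‖ :=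
            mul_le_mul_of_nonneg_right (ContinuousLinearMap.le_opNorm _ _) (norm_nonneg _)
        _ = ‖A - Q ∘L B ∘L adjoint Q‖ * ‖v‖ ^ 2 := by ring
    have hsplit : re ⟪(Q ∘L B ∘L adjoint Q) v, v⟫
        = re ⟪A v, v⟫ - re ⟪(A - Q ∘L B ∘L adjoint Q) v, v⟫ := by
      have : (Q ∘L B ∘L adjoint Q) v = A v - (A - Q ∘L B ∘L adjoint Q) v := by
        simp [ContinuousLinearMap.sub_apply]
      rw [this, inner_sub_left, map_sub]
    have hgt : (s - ε) * ‖v‖ ^ 2 < re ⟪B (adjoint Q v), adjoint Q v⟫ := by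
      rw [hBe, hsplit]
      have hub2 : re ⟪(A - Q ∘L B ∘L adjoint Q) v, v⟫ < ε * ‖v‖ ^ 2 := by
        have := (abs_le.mp hpert).2
        have hlt : ‖A - Q ∘L B ∘L adjoint Q‖ * ‖v‖ ^ 2 < ε * ‖v‖ ^ 2 := by
          apply mul_lt_mul_of_pos_right h2 (by positivity)
        linarith
      nlinarith [hAv]
    calc t * ‖adjoint Q v‖ ^ 2 ≤ t * ((1 + ε) * ‖v‖ ^ 2) :=
          mul_le_mul_of_nonneg_left hub ht.le
      _ = (s - ε) * ‖v‖ ^ 2 := by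
          rw [htdef]; field_simp
      _ < re ⟪B (adjoint Q v), adjoint Q v⟫ := hgt
  -- the injection
  set φ : ↥V →ₗ[ℂ] ↥Esp :=
    (((orthogonalProjection Esp).comp (adjoint Q)).toLinearMap).comp V.subtype with hφdef
  have hφinj : Function.Injective φ := by
    rw [← LinearMap.ker_eq_bot, LinearMap.ker_eq_bot']
    intro m hm
    by_contra hm0
    have hv0 : (m : H) ≠ 0 := fun h => hm0 (Subtype.ext h)
    obtain ⟨hw'0, hkey⟩ := key (m : H) m.2 hv0
    have hworth : adjoint Q (m : H) ∈ Espᗮ := by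
      have h4 : orthogonalProjection Esp (adjoint Q (m : H)) = 0 := hm
      exact Submodule.orthogonalProjectionOnto_eq_zero_iff.mp h4
    have := ray B hBc hBsa ht (adjoint Q (m : H)) hworth
    linarith [hkey, this]
  exact LinearMap.finrank_le_finrank_of_injective hφinj
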